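/- Let k be a field and let A, B, C ∈ SL_2(k). Then t_{ABC}² = (t_A·t_{BC} + t_B·t_{AC} + t_C·t_{AB} − t_A·t_B·t_C)·t_{ABC} − t_A² − t_B² − t_C² + t_A·t_B·t_{AB} + t_A·t_C·t_{AC} + t_B·t_C·t_{BC} − t_{AB}² − t_{AC}² − t_{BC}² − t_{AB}·t_{AC}·t_{BC} + 4. -/

import Mathlib

/-- The trace of an element of `SL₂(k)`, viewed as a matrix. -/
def trSL {k : Type*} [CommRing k] (M : Matrix.SpecialLinearGroup (Fin 2) k) : k :=
  Matrix.trace (M : Matrix (Fin 2) (Fin 2) k)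

/-- The fundamental quadratic relation satisfied by `t_{ABC}` for `A, B, C ∈ SL₂(k)`. -/
theorem trace_ABC_sq {k : Type*} [Field k] (A B C : Matrix.SpecialLinearGroup (Fin 2) k) :
    trSL (A * B * C) ^ 2 =
      (trSL A * trSL (B * C) + trSL B * trSL (A * C) + trSL C * trSL (A * B)
          - trSL A * trSL B * trSL C) * trSL (A * B * C)
        - trSL A ^ 2 - trSL B ^ 2 - trSL C ^ 2
        + trSL A * trSL B * trSL (A * B) + trSL A * trSL C * trSL (A * C)
        + trSL B * trSL C * trSL (B * C)
        - trSL (A * B) ^ 2 - trSL (A * C) ^ 2 - trSL (B * C) ^ 2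
        - trSL (A * B) * trSL (A * C) * trSL (B * C) + 4 := by
  simp only [trSL, Matrix.SpecialLinearGroup.coe_mul]
  obtain ⟨A, hA⟩ := A
  obtain ⟨B, hB⟩ := B
  obtain ⟨C, hC⟩ := C
  rw [Matrix.det_fin_two] at hA hB hC
  set a := A 0 0; set b := A 0 1; set c := A 1 0; set d := A 1 1
  set e := B 0 0; set f := B 0 1; set g := B 1 0; set h := B 1 1
  set i := C 0 0; set j := C 0 1; set m := C 1 0; set l := C 1 1
  simp only [trSL, Matrix.SpecialLinearGroup.coe_mul, Matrix.trace_fin_two,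
    Matrix.mul_apply, Fin.sum_univ_two]
  set_option maxRecDepth 100000 in
  linear_combination
      ((2) + (-1)*l*l + (-1)*i*i + (-1)*h*h + (1)*h*h*i*l + (-1)*g*h*j*l + (1)*g*h*i*j + (-1)*g*g*j*j + (-1)*f*h*m*l + (1)*f*h*i*m + (-1)*f*f*m*m + (1)*e*h*l*l + (-2)*e*h*i*l + (1)*e*h*i*i + (1)*e*g*j*l + (-1)*e*g*i*j + (1)*e*f*m*l + (-1)*e*f*i*m + (-1)*e*e + (1)*e*e*i*l) * hA +
      ((2) + (-2)*i*l + (-1)*d*d + (1)*d*d*i*l + (-1)*c*d*j*l + (1)*c*d*i*j + (-1)*c*c*j*j + (-1)*b*d*m*l + (1)*b*d*i*m + (1)*b*c*l*l + (-2)*b*c*i*l + (1)*b*c*i*i + (-1)*b*b*m*m + (1)*a*c*j*l + (-1)*a*c*i*j + (1)*a*b*m*l + (-1)*a*b*i*m + (-1)*a*a + (1)*a*a*i*l) * hB +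
      ((-2)*f*g + (1)*d*d*f*g + (-1)*c*d*f*h + (1)*c*d*e*f + (-1)*c*c*f*f + (-1)*b*d*g*h + (1)*b*d*e*g + (-2)*b*c + (1)*b*c*h*h + (-2)*b*c*f*g + (1)*b*c*e*e + (-1)*b*b*g*g + (1)*a*c*f*h + (-1)*a*c*e*f + (1)*a*b*g*h + (-1)*a*b*e*g + (1)*a*a*f*g) * hC
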